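/- arXiv:2605.10727 — 3 statements merged into one kernel-verified Lean document; each statement's English description precedes it below -/
import Mathlib

section
/- Let d ≥ 1, τ > 0, and let k_τ(x,y) = (2πτ²)^{−d/2} exp(−‖x−y‖²/(2τ²)) be the Gaussian kernel on ℝ^d. Let p be any probability measure on ℝ^d and define the smoothed density p̂_τ(x) = ∫ k_τ(x,y) dp(y). Then p̂_τ is everywhere positive and differentiable, all the integrals below are finite, and the original drifting attraction field satisfies V_p^+(x) := (∫ k_τ(x,y)(y − x) dp(y)) / (∫ k_τ(x,y) dp(y)) = τ² · ∇ log p̂_τ(x) for every x ∈ ℝ^d. -/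
open MeasureTheory

set_option maxHeartbeats 1000000
set_option synthInstance.maxHeartbeats 400000

/-- The Gaussian kernel with temperature `τ > 0` on `ℝ^d`:
`k_τ(x,y) = (2πτ²)^(−d/2) exp(−‖x−y‖²/(2τ²))`. -/
noncomputable def gaussKernel (d : ℕ) (τ : ℝ)
    (x y : EuclideanSpace ℝ (Fin d)) : ℝ :=
  (2 * Real.pi * τ ^ 2) ^ (-(d : ℝ) / 2) * Real.exp (-‖x - y‖ ^ 2 / (2 * τ ^ 2))

namespace GaussAux

open InnerProductSpace

variable {d : ℕ} {τ : ℝ}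

lemma C_pos (hτ : 0 < τ) : 0 < (2 * Real.pi * τ ^ 2) ^ (-(d : ℝ) / 2) := by
  have : 0 < 2 * Real.pi * τ ^ 2 := by positivity
  positivity

lemma gauss_pos (hτ : 0 < τ) (x y : EuclideanSpace ℝ (Fin d)) :
    0 < gaussKernel d τ x y := by
  unfold gaussKernel
  have := C_pos (d := d) hτ
  positivity

lemma gauss_le (hτ : 0 < τ) (x y : EuclideanSpace ℝ (Fin d)) :
    gaussKernel d τ x y ≤ (2 * Real.pi * τ ^ 2) ^ (-(d : ℝ) / 2) := by
  unfold gaussKernel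
  have h1 : Real.exp (-‖x - y‖ ^ 2 / (2 * τ ^ 2)) ≤ 1 := by
    rw [Real.exp_le_one_iff]
    have : (0:ℝ) ≤ ‖x - y‖ ^ 2 := by positivity
    have : (0:ℝ) < 2 * τ ^ 2 := by positivity
    apply div_nonpos_of_nonpos_of_nonneg <;> nlinarith
  exact mul_le_of_le_one_right (C_pos hτ).le h1

lemma key (hτ : 0 < τ) {r : ℝ} (hr : 0 ≤ r) :
    r * Real.exp (-r ^ 2 / (2 * τ ^ 2)) ≤ τ := by
  set E := Real.exp (-r ^ 2 / (2 * τ ^ 2)) with hE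
  have hEpos : 0 < E := Real.exp_pos _
  have h1 : E * E * Real.exp (r ^ 2 / τ ^ 2) = 1 := by
    rw [hE, ← Real.exp_add, ← Real.exp_add, ← Real.exp_zero]
    congr 1
    field_simp
    ring
  have h2 : 1 + r ^ 2 / τ ^ 2 ≤ Real.exp (r ^ 2 / τ ^ 2) := by
    have := Real.add_one_le_exp (r ^ 2 / τ ^ 2)
    linarith
  have hτ2 : (0:ℝ) < τ ^ 2 := by positivity
  have h3 : E * E * (1 + r ^ 2 / τ ^ 2) ≤ 1 := by
    nlinarith [mul_pos hEpos hEpos]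
  have h4 : (r * E) ^ 2 ≤ τ ^ 2 := by
    have h5 : E * E * (1 + r ^ 2 / τ ^ 2) * τ ^ 2 ≤ τ ^ 2 :=
      mul_le_of_le_one_left hτ2.le h3
    have h6 : E * E * (1 + r ^ 2 / τ ^ 2) * τ ^ 2
        = E * E * τ ^ 2 + E * E * r ^ 2 := by
      field_simp
    nlinarith [mul_pos hEpos hEpos]
  nlinarith [mul_nonneg hr hEpos.le, hτ]

lemma gauss_mul_norm_le (hτ : 0 < τ) (x y : EuclideanSpace ℝ (Fin d)) :
    gaussKernel d τ x y * ‖y - x‖ ≤ (2 * Real.pi * τ ^ 2) ^ (-(d : ℝ) / 2) * τ := by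
  unfold gaussKernel
  have hnorm : ‖y - x‖ = ‖x - y‖ := by rw [norm_sub_rev]
  rw [hnorm, mul_assoc]
  refine mul_le_mul_of_nonneg_left ?_ (C_pos hτ).le
  rw [mul_comm]
  exact key hτ (norm_nonneg _)

lemma gauss_continuous (x : EuclideanSpace ℝ (Fin d)) :
    Continuous (fun y => gaussKernel d τ x y) := by
  unfold gaussKernel
  fun_prop

lemma hasFDerivAt_gauss (hτ : 0 < τ) (x y : EuclideanSpace ℝ (Fin d)) :
    HasFDerivAt (fun x' => gaussKernel d τ x' y)
      (((τ ^ 2)⁻¹ * gaussKernel d τ x y) • innerSL ℝ (y - x)) x := by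
  have h1 : HasFDerivAt (fun x' : EuclideanSpace ℝ (Fin d) => ‖x' - y‖ ^ 2)
      (2 • (innerSL ℝ (x - y)).comp (ContinuousLinearMap.id ℝ _)) x := by
    simpa using ((hasFDerivAt_id x).sub_const y).norm_sq
  have heq : (fun x' : EuclideanSpace ℝ (Fin d) => -‖x' - y‖ ^ 2 / (2 * τ ^ 2))
      = fun x' => (-(2 * τ ^ 2)⁻¹) * ‖x' - y‖ ^ 2 := by
    funext x'
    rw [neg_mul, inv_mul_eq_div, neg_div]
  have h2 : HasFDerivAt (fun x' : EuclideanSpace ℝ (Fin d) => -‖x' - y‖ ^ 2 / (2 * τ ^ 2))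
      ((-(2 * τ ^ 2)⁻¹) • (2 • (innerSL ℝ (x - y)).comp (ContinuousLinearMap.id ℝ _))) x := by
    rw [heq]
    exact h1.const_mul (-(2 * τ ^ 2)⁻¹)
  have h3 := h2.exp
  have h4 := h3.const_mul ((2 * Real.pi * τ ^ 2) ^ (-(d : ℝ) / 2))
  convert h4 using 1
  iterate 4 rfl
  ext v
  simp only [gaussKernel, ContinuousLinearMap.smul_apply, innerSL_apply_apply,
    ContinuousLinearMap.coe_smul', Pi.smul_apply, ContinuousLinearMap.coe_comp',
    Function.comp_apply, ContinuousLinearMap.coe_id', id_eq, smul_eq_mul,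
    ContinuousLinearMap.smul_comp]
  rw [inner_sub_left, inner_sub_left]
  have hτ2 : (τ:ℝ) ^ 2 ≠ 0 := by positivity
  field_simp
  ring

end GaussAux

/-- for any probability measure `p` on `ℝ^d`, the Gaussian-smoothed density
`p̂_τ(x) = ∫ k_τ(x,y) dp(y)` is everywhere positive and differentiable, the relevant
integrands are integrable, and the original drifting attraction field satisfies
`V_p^+(x) = τ² ∇ log p̂_τ(x)`. -/
theorem gaussian_attraction_is_smoothed_score
    (d : ℕ) (hd : 1 ≤ d) (τ : ℝ) (hτ : 0 < τ)
    (p : Measure (EuclideanSpace ℝ (Fin d))) [IsProbabilityMeasure p] :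
    (∀ x, 0 < ∫ y, gaussKernel d τ x y ∂p)
    ∧ Differentiable ℝ (fun x => ∫ y, gaussKernel d τ x y ∂p)
    ∧ (∀ x, Integrable (fun y => gaussKernel d τ x y) p)
    ∧ (∀ x, Integrable (fun y => gaussKernel d τ x y • (y - x)) p)
    ∧ (∀ x, (∫ y, gaussKernel d τ x y ∂p)⁻¹ • (∫ y, gaussKernel d τ x y • (y - x) ∂p)
        = τ ^ 2 • gradient (fun x' => Real.log (∫ y, gaussKernel d τ x' y ∂p)) x) := by
  classical
  set H := EuclideanSpace ℝ (Fin d)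
  set C : ℝ := (2 * Real.pi * τ ^ 2) ^ (-(d : ℝ) / 2) with hC
  -- Integrability of the kernel
  have hint : ∀ x, Integrable (fun y => gaussKernel d τ x y) p := by
    intro x
    refine (integrable_const C).mono' ?_ ?_
    · exact (GaussAux.gauss_continuous x).aestronglyMeasurable
    · filter_upwards with y
      rw [Real.norm_eq_abs, abs_of_pos (GaussAux.gauss_pos hτ x y)]
      exact GaussAux.gauss_le hτ x y
  -- Integrability of the vector field integrand
  have hintv : ∀ x, Integrable (fun y => gaussKernel d τ x y • (y - x)) p := by
    intro x
    refine (integrable_const (C * τ)).mono' ?_ ?_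
    · exact ((GaussAux.gauss_continuous x).smul
        (continuous_id.sub continuous_const)).aestronglyMeasurable
    · filter_upwards with y
      rw [norm_smul, Real.norm_eq_abs, abs_of_pos (GaussAux.gauss_pos hτ x y)]
      exact GaussAux.gauss_mul_norm_le hτ x y
  -- Positivity
  have hpos : ∀ x, 0 < ∫ y, gaussKernel d τ x y ∂p := by
    intro x
    rw [integral_pos_iff_support_of_nonneg
      (fun y => (GaussAux.gauss_pos hτ x y).le) (hint x)]
    have : Function.support (fun y => gaussKernel d τ x y) = Set.univ := by
      ext y; simp [Function.mem_support, (GaussAux.gauss_pos hτ x y).ne']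
    rw [this]
    simp
  -- The derivative of the smoothed density
  have hfder : ∀ x₀ : H, HasFDerivAt (fun x => ∫ y, gaussKernel d τ x y ∂p)
      (∫ y, ((τ ^ 2)⁻¹ * gaussKernel d τ x₀ y) • innerSL ℝ (y - x₀) ∂p) x₀ := by
    intro x₀
    refine hasFDerivAt_integral_of_dominated_of_fderiv_le (𝕜 := ℝ)
      (F' := fun x y => ((τ ^ 2)⁻¹ * gaussKernel d τ x y) • innerSL ℝ (y - x)) (bound := fun _ => (τ ^ 2)⁻¹ * (C * τ))
      (Metric.ball_mem_nhds x₀ one_pos) ?_ (hint x₀) ?_ ?_ (integrable_const _) ?_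
    · filter_upwards with x
      exact (GaussAux.gauss_continuous x).aestronglyMeasurable
    · apply Continuous.aestronglyMeasurable
      exact (continuous_const.mul (GaussAux.gauss_continuous x₀)).smul
        ((innerSL ℝ).continuous.comp (continuous_id.sub continuous_const))
    · filter_upwards with y
      intro x hx
      refine (norm_smul_le ((τ ^ 2)⁻¹ * gaussKernel d τ x y) ((innerSL ℝ) (y - x))).trans ?_
      rw [Real.norm_eq_abs,
        abs_of_pos (mul_pos (by positivity) (GaussAux.gauss_pos hτ x y)),
        innerSL_apply_norm, mul_assoc]
      exact mul_le_mul_of_nonneg_left (GaussAux.gauss_mul_norm_le hτ x y) (by positivity)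
    · filter_upwards with y
      intro x hx
      exact GaussAux.hasFDerivAt_gauss hτ x y
  -- rewrite the derivative as toDual of a vector
  have hgrad : ∀ x₀ : H, HasGradientAt (fun x => ∫ y, gaussKernel d τ x y ∂p)
      ((τ ^ 2)⁻¹ • ∫ y, gaussKernel d τ x₀ y • (y - x₀) ∂p) x₀ := by
    intro x₀
    rw [hasGradientAt_iff_hasFDerivAt]
    set L : H →L[ℝ] (H →L[ℝ] ℝ) :=
      (InnerProductSpace.toDual ℝ H).toContinuousLinearEquiv.toContinuousLinearMap with hL
    have h2 : (fun y : H => ((τ ^ 2)⁻¹ * gaussKernel d τ x₀ y) • innerSL ℝ (y - x₀))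
        = fun y : H => (τ ^ 2)⁻¹ • L (gaussKernel d τ x₀ y • (y - x₀)) := by
      funext y
      ext v
      simp [hL, InnerProductSpace.toDual_apply_apply, inner_smul_left, smul_smul]
    have heq : (∫ y, ((τ ^ 2)⁻¹ * gaussKernel d τ x₀ y) • innerSL ℝ (y - x₀) ∂p)
        = (InnerProductSpace.toDual ℝ H)
          ((τ ^ 2)⁻¹ • ∫ y, gaussKernel d τ x₀ y • (y - x₀) ∂p) := by
      rw [h2, integral_smul, ContinuousLinearMap.integral_comp_comm _ (hintv x₀)]
      ext v
      simp [hL, InnerProductSpace.toDual_apply_apply, inner_smul_left]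
    rw [← heq]
    exact hfder x₀
  refine ⟨hpos, fun x => ((hgrad x).hasFDerivAt).differentiableAt, hint, hintv, ?_⟩
  intro x
  have hne : (∫ y, gaussKernel d τ x y ∂p) ≠ 0 := (hpos x).ne'
  have hlog : HasGradientAt (fun x' => Real.log (∫ y, gaussKernel d τ x' y ∂p))
      ((∫ y, gaussKernel d τ x y ∂p)⁻¹ • (τ ^ 2)⁻¹ • ∫ y, gaussKernel d τ x y • (y - x) ∂p) x := by
    rw [hasGradientAt_iff_hasFDerivAt]
    have hd1 := ((hgrad x).hasFDerivAt).log hne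
    have h5 : (InnerProductSpace.toDual ℝ H)
        ((∫ y, gaussKernel d τ x y ∂p)⁻¹ • (τ ^ 2)⁻¹ • ∫ y, gaussKernel d τ x y • (y - x) ∂p)
        = (∫ y, gaussKernel d τ x y ∂p)⁻¹ • (InnerProductSpace.toDual ℝ H)
          ((τ ^ 2)⁻¹ • ∫ y, gaussKernel d τ x y • (y - x) ∂p) := by
      ext v
      simp [InnerProductSpace.toDual_apply_apply, inner_smul_left]
    rw [h5]
    exact hd1
  rw [hlog.gradient, smul_smul, smul_smul]
  congr 1
  rw [mul_comm (τ ^ 2) _, mul_assoc, mul_inv_cancel₀ (by positivity : (τ:ℝ) ^ 2 ≠ 0), mul_one]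
end

section
/- Let d ≥ 1, τ > 0, and let k_τ(x,y) = (2πτ²)^{−d/2} exp(−‖x−y‖²/(2τ²)) be the Gaussian kernel on ℝ^d. Let p and q be probability measures on ℝ^d with smoothed densities p̂_τ(x) = ∫ k_τ(x,y) dp(y) and q̂_τ(x) = ∫ k_τ(x,y) dq(y). Then the original drifting field V_{p,q}(x) = V_p^+(x) − V_q^−(x) satisfies V_{p,q}(x) = τ² (∇ log p̂_τ(x) − ∇ log q̂_τ(x)) for every x, and the kernel-gradient drift V^∇_{p,q}(x) = G_p(x) − G_q(x) satisfies V^∇_{p,q}(x) = (1/τ²) · V_{p,q}(x); that is, for the Gaussian kernel the kernel-gradient formulation recovers the original drifting field up to the constant factor τ². -/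
open MeasureTheory Metric

section Aux

variable {d : ℕ} {τ : ℝ}

local notation "E" => EuclideanSpace ℝ (Fin d)
local notation "C" => (2 * Real.pi * τ ^ 2) ^ (-(d : ℝ) / 2)

lemma gauss_pos (hτ : τ ≠ 0) (x y : E) : 0 < gaussKernel d τ x y := by
  unfold gaussKernel
  have h2 : (0:ℝ) < 2 * Real.pi * τ ^ 2 := by positivity
  positivity

lemma mul_exp_le (hτ : 0 < τ) {t : ℝ} (ht : 0 ≤ t) :
    t * Real.exp (-t ^ 2 / (2 * τ ^ 2)) ≤ τ := by
  have hs1 : (0:ℝ) < t ^ 2 / (2 * τ ^ 2) + 1 := by positivity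
  have h2 : t ^ 2 / (2 * τ ^ 2) + 1 ≤ Real.exp (t ^ 2 / (2 * τ ^ 2)) :=
    Real.add_one_le_exp _
  have h4 : (0:ℝ) < Real.exp (-t ^ 2 / (2 * τ ^ 2)) := Real.exp_pos _
  have h3 : Real.exp (-t ^ 2 / (2 * τ ^ 2)) * Real.exp (t ^ 2 / (2 * τ ^ 2)) = 1 := by
    rw [← Real.exp_add]; ring_nf; exact Real.exp_zero
  have h5 : Real.exp (-t ^ 2 / (2 * τ ^ 2)) * (t ^ 2 / (2 * τ ^ 2) + 1) ≤ 1 := by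
    calc Real.exp (-t ^ 2 / (2 * τ ^ 2)) * (t ^ 2 / (2 * τ ^ 2) + 1)
        ≤ Real.exp (-t ^ 2 / (2 * τ ^ 2)) * Real.exp (t ^ 2 / (2 * τ ^ 2)) :=
          mul_le_mul_of_nonneg_left h2 h4.le
      _ = 1 := h3
  have h6 : Real.exp (-t ^ 2 / (2 * τ ^ 2)) ≤ 1 / (t ^ 2 / (2 * τ ^ 2) + 1) :=
    (le_div_iff₀ hs1).2 h5
  calc t * Real.exp (-t ^ 2 / (2 * τ ^ 2))
      ≤ t * (1 / (t ^ 2 / (2 * τ ^ 2) + 1)) := mul_le_mul_of_nonneg_left h6 ht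
    _ ≤ τ := by
        rw [mul_one_div, div_le_iff₀ hs1]
        have key : t ^ 2 / (2 * τ ^ 2) * (2 * τ ^ 2) = t ^ 2 := by field_simp
        nlinarith [mul_nonneg hτ.le (sq_nonneg (t - τ))]

lemma gauss_le (hτ : 0 < τ) (x y : E) : gaussKernel d τ x y ≤ C := by
  unfold gaussKernel
  have hC : (0:ℝ) < C := by positivity
  have h1 : Real.exp (-‖x - y‖ ^ 2 / (2 * τ ^ 2)) ≤ 1 := by
    apply Real.exp_le_one_iff.2
    rw [neg_div]
    exact neg_nonpos.2 (by positivity)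
  nlinarith

lemma gauss_smul_norm_le (hτ : 0 < τ) (x y : E) :
    ‖gaussKernel d τ x y • (y - x)‖ ≤ C * τ := by
  have hC : (0:ℝ) < C := by positivity
  rw [norm_smul, Real.norm_eq_abs, abs_of_pos (gauss_pos hτ.ne' x y)]
  unfold gaussKernel
  rw [mul_assoc, norm_sub_rev x y]
  refine mul_le_mul_of_nonneg_left ?_ hC.le
  rw [mul_comm]
  exact mul_exp_le hτ (norm_nonneg (y - x))

lemma gauss_cont (x : E) : Continuous fun y : E => gaussKernel d τ x y := by
  unfold gaussKernel; fun_prop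

lemma gauss_integrable (hτ : 0 < τ) (μ : Measure E) [IsProbabilityMeasure μ] (x : E) :
    Integrable (fun y => gaussKernel d τ x y) μ := by
  refine Integrable.mono' (integrable_const C) (gauss_cont x).aestronglyMeasurable ?_
  filter_upwards with y
  rw [Real.norm_eq_abs, abs_of_pos (gauss_pos hτ.ne' x y)]
  exact gauss_le hτ x y

lemma gauss_smul_integrable (hτ : 0 < τ) (μ : Measure E) [IsProbabilityMeasure μ] (x : E) :
    Integrable (fun y => gaussKernel d τ x y • (y - x)) μ := by
  refine Integrable.mono' (integrable_const (C * τ)) ?_ ?_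
  · exact Continuous.aestronglyMeasurable
      ((gauss_cont x).smul (continuous_id.sub continuous_const))
  · filter_upwards with y using gauss_smul_norm_le hτ x y

lemma gauss_integral_pos (hτ : 0 < τ) (μ : Measure E) [IsProbabilityMeasure μ] (x : E) :
    0 < ∫ y, gaussKernel d τ x y ∂μ := by
  rw [integral_pos_iff_support_of_nonneg (fun y => (gauss_pos hτ.ne' x y).le)
    (gauss_integrable hτ μ x)]
  have h : (Function.support fun y => gaussKernel d τ x y) = Set.univ := by
    ext y; simp [Function.mem_support, (gauss_pos hτ.ne' x y).ne']
  rw [h]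
  simp

lemma hasFDerivAt_gauss (hτ : τ ≠ 0) (y x : E) :
    HasFDerivAt (fun x' : E => gaussKernel d τ x' y)
      ((InnerProductSpace.toDual ℝ (EuclideanSpace ℝ (Fin d)))
        ((τ ^ 2)⁻¹ • gaussKernel d τ x y • (y - x))) x := by
  have h0 : HasFDerivAt (fun x' : E => x' - y)
      (ContinuousLinearMap.id ℝ (EuclideanSpace ℝ (Fin d))) x :=
    (hasFDerivAt_id x).sub_const y
  have h1 := h0.inner ℝ h0
  simp only [real_inner_self_eq_norm_sq] at h1
  have h3 := h1.const_smul (-(2 * τ ^ 2)⁻¹)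
  have hfun : (fun x' : E => -(2 * τ ^ 2)⁻¹ • ‖x' - y‖ ^ 2)
      = fun x' : E => -‖x' - y‖ ^ 2 / (2 * τ ^ 2) := by
    funext x'; simp only [smul_eq_mul]; ring
  rw [show ((-(2 * τ ^ 2)⁻¹) • fun t : E => ‖t - y‖ ^ 2) = (fun x' : E => -(2 * τ ^ 2)⁻¹ • ‖x' - y‖ ^ 2) from rfl, hfun] at h3
  have h4 := h3.exp
  have h5 := h4.const_mul C
  refine (show HasFDerivAt (fun x' : E => gaussKernel d τ x' y) _ x from h5).congr_fderiv ?_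
  symm
  apply ContinuousLinearMap.ext
  intro v
  have hne : (y - x) = -(x - y) := by abel
  simp only [InnerProductSpace.toDual_apply_apply, ContinuousLinearMap.smul_apply,
    ContinuousLinearMap.coe_comp', Function.comp_apply, ContinuousLinearMap.prod_apply,
    ContinuousLinearMap.coe_id', id_eq, fderivInnerCLM_apply, smul_eq_mul,
    real_inner_smul_left, gaussKernel, hne, inner_neg_left]
  rw [real_inner_comm v (x - y)]
  have h2 : (τ:ℝ) ^ 2 ≠ 0 := pow_ne_zero 2 hτ
  field_simp
  ring

lemma hasGradientAt_gauss (hτ : τ ≠ 0) (y x : E) :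
    HasGradientAt (fun x' : E => gaussKernel d τ x' y)
      ((τ ^ 2)⁻¹ • gaussKernel d τ x y • (y - x)) x :=
  hasGradientAt_iff_hasFDerivAt.2 (hasFDerivAt_gauss hτ y x)

lemma hasGradientAt_integral (hτ : 0 < τ) (μ : Measure E) [IsProbabilityMeasure μ] (x : E) :
    HasGradientAt (fun x' : E => ∫ y, gaussKernel d τ x' y ∂μ)
      ((τ ^ 2)⁻¹ • ∫ y, gaussKernel d τ x y • (y - x) ∂μ) x := by
  rw [hasGradientAt_iff_hasFDerivAt]
  have key := hasFDerivAt_integral_of_dominated_of_fderiv_le (𝕜 := ℝ) (μ := μ) (x₀ := x)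
    (F := fun x' y => gaussKernel d τ x' y)
    (F' := fun x' y => (InnerProductSpace.toDual ℝ (EuclideanSpace ℝ (Fin d)))
      ((τ ^ 2)⁻¹ • gaussKernel d τ x' y • (y - x')))
    (bound := fun _ => (τ ^ 2)⁻¹ * (C * τ)) (ball_mem_nhds x one_pos)
    (Filter.Eventually.of_forall fun x' => (gauss_cont x').aestronglyMeasurable)
    (gauss_integrable hτ μ x)
    (Continuous.aestronglyMeasurable (by
      exact (InnerProductSpace.toDual ℝ (EuclideanSpace ℝ (Fin d))).continuous.comp
        (by have := gauss_cont (d := d) (τ := τ) x; fun_prop)))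
    (Filter.Eventually.of_forall fun y x' _ => by
      rw [LinearIsometryEquiv.norm_map, norm_smul, Real.norm_eq_abs,
        abs_of_nonneg (by positivity : (0:ℝ) ≤ (τ ^ 2)⁻¹)]
      exact mul_le_mul_of_nonneg_left (gauss_smul_norm_le hτ x' y) (by positivity))
    (integrable_const _)
    (Filter.Eventually.of_forall fun y x' _ => hasFDerivAt_gauss hτ.ne' y x')
  refine key.congr_fderiv ?_
  have hint : Integrable (fun y => (τ ^ 2)⁻¹ • gaussKernel d τ x y • (y - x)) μ :=
    (gauss_smul_integrable hτ μ x).smul ((τ ^ 2)⁻¹)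
  set Lc := (InnerProductSpace.toDual ℝ
      (EuclideanSpace ℝ (Fin d))).toContinuousLinearEquiv.toContinuousLinearMap with hLc
  calc ∫ y, (InnerProductSpace.toDual ℝ (EuclideanSpace ℝ (Fin d)))
          ((τ ^ 2)⁻¹ • gaussKernel d τ x y • (y - x)) ∂μ
      = ∫ y, Lc ((τ ^ 2)⁻¹ • gaussKernel d τ x y • (y - x)) ∂μ := rfl
    _ = Lc (∫ y, (τ ^ 2)⁻¹ • gaussKernel d τ x y • (y - x) ∂μ) :=
        ContinuousLinearMap.integral_comp_comm Lc hint
    _ = (InnerProductSpace.toDual ℝ (EuclideanSpace ℝ (Fin d)))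
          ((τ ^ 2)⁻¹ • ∫ y, gaussKernel d τ x y • (y - x) ∂μ) := by
        rw [integral_smul]; rfl


lemma hasGradientAt_log_integral (hτ : 0 < τ) (μ : Measure E) [IsProbabilityMeasure μ]
    (x : E) :
    HasGradientAt (fun x' : E => Real.log (∫ y, gaussKernel d τ x' y ∂μ))
      (((∫ y, gaussKernel d τ x y ∂μ)⁻¹ * (τ ^ 2)⁻¹) •
        ∫ y, gaussKernel d τ x y • (y - x) ∂μ) x := by
  rw [hasGradientAt_iff_hasFDerivAt]
  have h := ((hasGradientAt_integral hτ μ x).hasFDerivAt).log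
    (gauss_integral_pos hτ μ x).ne'
  refine h.congr_fderiv ?_
  rw [← _root_.map_smul, smul_smul]

end Aux


/-- for the Gaussian kernel, the original drifting field equals
`τ²` times the difference of smoothed scores, and the kernel-gradient drift equals
`(1/τ²)` times the original drifting field. -/
theorem gaussian_drifting_field_eq
    (d : ℕ) (hd : 1 ≤ d) (τ : ℝ) (hτ : 0 < τ)
    (p q : Measure (EuclideanSpace ℝ (Fin d)))
    [IsProbabilityMeasure p] [IsProbabilityMeasure q] :
    (∀ x,
      ((∫ y, gaussKernel d τ x y ∂p)⁻¹ • ∫ y, gaussKernel d τ x y • (y - x) ∂p)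
        - ((∫ y, gaussKernel d τ x y ∂q)⁻¹ • ∫ y, gaussKernel d τ x y • (y - x) ∂q)
      = τ ^ 2 • (gradient (fun x' => Real.log (∫ y, gaussKernel d τ x' y ∂p)) x
          - gradient (fun x' => Real.log (∫ y, gaussKernel d τ x' y ∂q)) x))
    ∧ (∀ x,
      ((∫ y, gaussKernel d τ x y ∂p)⁻¹ • ∫ y, gradient (fun x' => gaussKernel d τ x' y) x ∂p)
        - ((∫ y, gaussKernel d τ x y ∂q)⁻¹ •
            ∫ y, gradient (fun x' => gaussKernel d τ x' y) x ∂q)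
      = (1 / τ ^ 2) •
          (((∫ y, gaussKernel d τ x y ∂p)⁻¹ • ∫ y, gaussKernel d τ x y • (y - x) ∂p)
            - ((∫ y, gaussKernel d τ x y ∂q)⁻¹ •
                ∫ y, gaussKernel d τ x y • (y - x) ∂q))) := by
  have ht2 : (τ:ℝ) ^ 2 ≠ 0 := pow_ne_zero 2 hτ.ne'
  constructor
  · intro x
    rw [(hasGradientAt_log_integral hτ p x).gradient,
      (hasGradientAt_log_integral hτ q x).gradient, smul_sub, smul_smul, smul_smul]
    have h1 : ∀ c : ℝ, τ ^ 2 * (c⁻¹ * (τ ^ 2)⁻¹) = c⁻¹ := by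
      intro c; rw [mul_comm c⁻¹, ← mul_assoc, mul_inv_cancel₀ ht2, one_mul]
    rw [h1, h1]
  · intro x
    have hg : ∀ y, gradient (fun x' => gaussKernel d τ x' y) x
        = (τ ^ 2)⁻¹ • gaussKernel d τ x y • (y - x) :=
      fun y => (hasGradientAt_gauss hτ.ne' y x).gradient
    simp_rw [hg, integral_smul, one_div, smul_sub, smul_smul]
    rw [mul_comm ((τ ^ 2)⁻¹), mul_comm ((τ ^ 2)⁻¹)]
end

section
/- Let d ≥ 1, let p, q : ℝ^d → ℝ be continuously differentiable probability densities with p(z) > 0 and q(z) > 0 for all z, and let V : ℝ^d → ℝ^d be a continuously differentiable vector field with compact support. Then ∫_{ℝ^d} ( ⟨∇ log p(z), V(z)⟩ + div V(z) ) q(z) dz = ∫_{ℝ^d} ⟨∇ log p(z) − ∇ log q(z), V(z)⟩ q(z) dz. Equivalently, the expected trace of the Stein operator A_p V(z) = ∇ log p(z) V(z)ᵀ + ∇V(z) under q equals the expected inner product of the score difference ∇ log p − ∇ log q with V under q. -/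
open MeasureTheory

lemma inner_gradient_eq' {d : ℕ} (f : EuclideanSpace ℝ (Fin d) → ℝ)
    (z v : EuclideanSpace ℝ (Fin d)) :
    (inner ℝ (gradient f z) v : ℝ) = fderiv ℝ f z v := by
  simp [gradient, InnerProductSpace.toDual_symm_apply]

lemma euclid_sum_single' {d : ℕ} (x : EuclideanSpace ℝ (Fin d)) :
    ∑ i, x i • EuclideanSpace.single i (1:ℝ) = x := by
  ext j
  rw [show (∑ i, x i • EuclideanSpace.single i (1:ℝ)) j
      = ∑ i, (x i • EuclideanSpace.single i (1:ℝ)) j from by rw [WithLp.ofLp_sum, Finset.sum_apply]]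
  simp [EuclideanSpace.single_apply]

/-- expected trace of the Stein operator: for positive `C¹` probability
densities `p, q` on `ℝ^d` and a `C¹` compactly supported vector field `V`,
`∫ (⟨∇ log p, V⟩ + div V) q = ∫ ⟨∇ log p − ∇ log q, V⟩ q`. -/
theorem stein_operator_expected_trace
    (d : ℕ) (hd : 1 ≤ d)
    (p q : EuclideanSpace ℝ (Fin d) → ℝ)
    (hp : ContDiff ℝ 1 p) (hq : ContDiff ℝ 1 q)
    (hppos : ∀ z, 0 < p z) (hqpos : ∀ z, 0 < q z)
    (hpint : Integrable p) (hqint : Integrable q)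
    (hpnorm : ∫ z, p z = 1) (hqnorm : ∫ z, q z = 1)
    (V : EuclideanSpace ℝ (Fin d) → EuclideanSpace ℝ (Fin d))
    (hV : ContDiff ℝ 1 V) (hVc : HasCompactSupport V) :
    ∫ z, ((inner ℝ (gradient (fun z' => Real.log (p z')) z) (V z) : ℝ)
        + ∑ i, fderiv ℝ V z (EuclideanSpace.single i 1) i) * q z
      = ∫ z, (inner ℝ (gradient (fun z' => Real.log (p z')) z
          - gradient (fun z' => Real.log (q z')) z) (V z) : ℝ) * q z := by
  classical
  have hpd : Differentiable ℝ p := hp.differentiable one_ne_zero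
  have hqd : Differentiable ℝ q := hq.differentiable one_ne_zero
  have hVd : Differentiable ℝ V := hV.differentiable one_ne_zero
  have hVcont : Continuous V := hVd.continuous
  have hpc : Continuous p := hpd.continuous
  have hqc : Continuous q := hqd.continuous
  have hfp : Continuous (fderiv ℝ p) := hp.continuous_fderiv one_ne_zero
  have hfq : Continuous (fderiv ℝ q) := hq.continuous_fderiv one_ne_zero
  have hfV : Continuous (fderiv ℝ V) := hV.continuous_fderiv one_ne_zero
  -- log derivatives
  have hlogp : ∀ z, fderiv ℝ (fun z' => Real.log (p z')) z = (p z)⁻¹ • fderiv ℝ p z :=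
    fun z => ((hpd z).hasFDerivAt.log (hppos z).ne').fderiv
  have hlogq : ∀ z, fderiv ℝ (fun z' => Real.log (q z')) z = (q z)⁻¹ • fderiv ℝ q z :=
    fun z => ((hqd z).hasFDerivAt.log (hqpos z).ne').fderiv
  have hA : ∀ z, (inner ℝ (gradient (fun z' => Real.log (p z')) z) (V z) : ℝ)
      = (p z)⁻¹ * fderiv ℝ p z (V z) := by
    intro z
    rw [inner_gradient_eq', hlogp z]; rfl
  have hB : ∀ z, (inner ℝ (gradient (fun z' => Real.log (q z')) z) (V z) : ℝ)
      = (q z)⁻¹ * fderiv ℝ q z (V z) := by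
    intro z
    rw [inner_gradient_eq', hlogq z]; rfl
  -- integrability helpers
  have hsuppV : ∀ (f : EuclideanSpace ℝ (Fin d) → ℝ),
      (∀ z, V z = 0 → f z = 0) → HasCompactSupport f := by
    intro f hf
    apply hVc.mono'
    intro z hz
    by_contra h
    exact hz (hf z (image_eq_zero_of_notMem_tsupport h))
  -- the three main integrands are continuous with compact support
  have contA : Continuous fun z => ((p z)⁻¹ * fderiv ℝ p z (V z)) * q z :=
    ((hpc.inv₀ (fun z => (hppos z).ne')).mul (hfp.clm_apply hVcont)).mul hqc
  have contB : Continuous fun z => ((q z)⁻¹ * fderiv ℝ q z (V z)) * q z :=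
    ((hqc.inv₀ (fun z => (hqpos z).ne')).mul (hfq.clm_apply hVcont)).mul hqc
  have IA : Integrable fun z => ((p z)⁻¹ * fderiv ℝ p z (V z)) * q z := by
    refine contA.integrable_of_hasCompactSupport (hsuppV _ ?_)
    intro z h; simp [h]
  have IB : Integrable fun z => ((q z)⁻¹ * fderiv ℝ q z (V z)) * q z := by
    refine contB.integrable_of_hasCompactSupport (hsuppV _ ?_)
    intro z h; simp [h]
  -- divergence term
  have contDi : ∀ i : Fin d, Continuous fun z => fderiv ℝ V z (EuclideanSpace.single i 1) i := by
    intro i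
    exact (EuclideanSpace.proj i).continuous.comp (hfV.clm_apply continuous_const)
  have IDi : ∀ i : Fin d,
      Integrable fun z => fderiv ℝ V z (EuclideanSpace.single i 1) i * q z := by
    intro i
    refine (((contDi i).mul hqc)).integrable_of_hasCompactSupport ?_
    have h1 : HasCompactSupport (fun z => fderiv ℝ V z (EuclideanSpace.single i 1) i) :=
      (hVc.fderiv ℝ).comp_left
        (g := fun L : EuclideanSpace ℝ (Fin d) →L[ℝ] EuclideanSpace ℝ (Fin d) =>
          L (EuclideanSpace.single i 1) i) (by simp)
    exact h1.mul_right
  have ID : Integrable fun z => (∑ i, fderiv ℝ V z (EuclideanSpace.single i 1) i) * q z := by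
    have : (fun z => (∑ i, fderiv ℝ V z (EuclideanSpace.single i 1) i) * q z)
        = fun z => ∑ i, fderiv ℝ V z (EuclideanSpace.single i 1) i * q z := by
      funext z; rw [Finset.sum_mul]
    rw [this]
    exact integrable_finset_sum _ (fun i _ => IDi i)
  have Ifq : Integrable fun z => fderiv ℝ q z (V z) := by
    refine ((hfq.clm_apply hVcont)).integrable_of_hasCompactSupport (hsuppV _ ?_)
    intro z h; simp [h]
  -- integration by parts per coordinate
  have key : ∫ z, (∑ i, fderiv ℝ V z (EuclideanSpace.single i 1) i) * q z
      = - ∫ z, fderiv ℝ q z (V z) := by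
    have coord : ∀ (i : Fin d) z, fderiv ℝ (fun y => V y i) z (EuclideanSpace.single i 1)
        = fderiv ℝ V z (EuclideanSpace.single i 1) i := by
      intro i z
      have h1 : fderiv ℝ (fun y => (EuclideanSpace.proj (𝕜 := ℝ) i) (V y)) z
          = (EuclideanSpace.proj (𝕜 := ℝ) i).comp (fderiv ℝ V z) :=
        ((EuclideanSpace.proj (𝕜 := ℝ) i).hasFDerivAt.comp z (hVd z).hasFDerivAt).fderiv
      have h2 : (fun y => (EuclideanSpace.proj (𝕜 := ℝ) i) (V y)) = fun y => V y i := rfl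
      rw [← h2, h1]; rfl
    have ibp : ∀ i : Fin d, ∫ z, q z * fderiv ℝ V z (EuclideanSpace.single i 1) i
        = - ∫ z, fderiv ℝ q z (EuclideanSpace.single i 1) * V z i := by
      intro i
      have hgi : Differentiable ℝ (fun y => V y i) :=
        fun z => ((EuclideanSpace.proj (𝕜 := ℝ) i).differentiableAt.comp z (hVd z))
      have h := integral_mul_fderiv_eq_neg_fderiv_mul_of_integrable
        (μ := volume) (f := q) (g := fun y => V y i) (v := EuclideanSpace.single i 1)
        ?_ ?_ ?_ (fun x _ => hqd x) (fun x _ => hgi x)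
      · simp only [coord i] at h
        exact h
      · -- Integrable (fderiv q · v * V · i)
        refine ((hfq.clm_apply continuous_const).mul
          ((EuclideanSpace.proj i).continuous.comp hVcont)).integrable_of_hasCompactSupport
          (hsuppV _ ?_)
        intro z h; simp [h]
      · simp only [coord i]
        refine (hqc.mul (contDi i)).integrable_of_hasCompactSupport ?_
        have h1 : HasCompactSupport (fun z => fderiv ℝ V z (EuclideanSpace.single i 1) i) :=
          (hVc.fderiv ℝ).comp_left
            (g := fun L : EuclideanSpace ℝ (Fin d) →L[ℝ] EuclideanSpace ℝ (Fin d) =>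
              L (EuclideanSpace.single i 1) i) (by simp)
        exact h1.mul_left
      · refine (hqc.mul ((EuclideanSpace.proj i).continuous.comp
          hVcont)).integrable_of_hasCompactSupport (hsuppV _ ?_)
        intro z h; simp [h]
    calc ∫ z, (∑ i, fderiv ℝ V z (EuclideanSpace.single i 1) i) * q z
        = ∑ i, ∫ z, q z * fderiv ℝ V z (EuclideanSpace.single i 1) i := by
          rw [← integral_finset_sum]
          · congr 1; funext z
            rw [Finset.sum_mul]
            exact Finset.sum_congr rfl fun i _ => mul_comm _ _
          · intro i _
            have := IDi i
            simpa [mul_comm] using this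
      _ = ∑ i, - ∫ z, fderiv ℝ q z (EuclideanSpace.single i 1) * V z i := by
          exact Finset.sum_congr rfl fun i _ => ibp i
      _ = - ∫ z, ∑ i, fderiv ℝ q z (EuclideanSpace.single i 1) * V z i := by
          rw [integral_finset_sum _ (fun i _ => ?_), Finset.sum_neg_distrib]
          refine ((hfq.clm_apply continuous_const).mul
            ((EuclideanSpace.proj i).continuous.comp hVcont)).integrable_of_hasCompactSupport
            (hsuppV _ ?_)
          intro z h; simp [h]
      _ = - ∫ z, fderiv ℝ q z (V z) := by
          congr 1; congr 1; funext z
          have : fderiv ℝ q z (V z)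
              = fderiv ℝ q z (∑ i, V z i • EuclideanSpace.single i (1:ℝ)) := by
            rw [euclid_sum_single']
          rw [this, map_sum]
          exact Finset.sum_congr rfl fun i _ => by
            rw [_root_.map_smul]; simp [mul_comm]
  -- now assemble
  have hqinv : ∀ z, ((q z)⁻¹ * fderiv ℝ q z (V z)) * q z = fderiv ℝ q z (V z) := by
    intro z
    field_simp
    exact mul_div_cancel_left₀ _ (hqpos z).ne'
  simp only [inner_sub_left, hA, hB]
  have lhs_eq : (fun z => (((p z)⁻¹ * fderiv ℝ p z (V z))
      + ∑ i, fderiv ℝ V z (EuclideanSpace.single i 1) i) * q z)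
      = fun z => ((p z)⁻¹ * fderiv ℝ p z (V z)) * q z
        + (∑ i, fderiv ℝ V z (EuclideanSpace.single i 1) i) * q z := by
    funext z; ring
  have rhs_eq : (fun z => (((p z)⁻¹ * fderiv ℝ p z (V z))
      - ((q z)⁻¹ * fderiv ℝ q z (V z))) * q z)
      = fun z => ((p z)⁻¹ * fderiv ℝ p z (V z)) * q z - fderiv ℝ q z (V z) := by
    funext z; rw [sub_mul, hqinv z]
  rw [lhs_eq, rhs_eq, integral_add IA ID, integral_sub IA Ifq, key]
  ring
end
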